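/- Let M be an n×n symmetric negative definite matrix with nonnegative off-diagonal entries. Let Z, Z' ∈ ℤ^n satisfy: M·Z ≤ 0 and M·Z' ≤ 0 componentwise; 1 ≤ Z'_i ≤ Z_i for every i; and for every index v with (M·Z)_v < 0 one has Z_v = 1. Then Z = Z'. -/

import Mathlib

theorem zmax_eq_zmin {n : ℕ} (M : Matrix (Fin n) (Fin n) ℤ)
    (hsymm : M.IsSymm)
    (hnegdef : (-(M.map (Int.cast : ℤ → ℝ))).PosDef)
    (hoff : ∀ i j, i ≠ j → 0 ≤ M i j)
    (Z Z' : Fin n → ℤ)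
    (hZ : ∀ i, M.mulVec Z i ≤ 0) (hZ' : ∀ i, M.mulVec Z' i ≤ 0)
    (hbound : ∀ i, 1 ≤ Z' i ∧ Z' i ≤ Z i)
    (hLnode : ∀ v, M.mulVec Z v < 0 → Z v = 1) :
    Z = Z' := by
  set D : Fin n → ℤ := fun i => Z i - Z' i with hD
  have hDnonneg : ∀ i, 0 ≤ D i := fun i => by
    have := (hbound i).2; simp [hD]; omega
  -- each term D_v * (M Z)_v = 0
  have hterm : ∀ v, D v * M.mulVec Z v = 0 := by
    intro v
    rcases lt_or_eq_of_le (hZ v) with h | h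
    · have h1 := hLnode v h
      have h2 := (hbound v).1
      have h3 := (hbound v).2
      have : D v = 0 := by simp [hD]; omega
      simp [this]
    · simp [h]
  have hS : 0 ≤ dotProduct D (M.mulVec D) := by
    have hMD : M.mulVec D = M.mulVec Z - M.mulVec Z' := by
      have : D = Z - Z' := rfl
      rw [this, Matrix.mulVec_sub]
    rw [hMD]
    have h1 : dotProduct D (M.mulVec Z) = 0 := by
      unfold dotProduct
      exact Finset.sum_eq_zero fun v _ => hterm v
    have h2 : dotProduct D (M.mulVec Z') ≤ 0 := by
      unfold dotProduct
      apply Finset.sum_nonpos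
      intro v _
      exact mul_nonpos_of_nonneg_of_nonpos (hDnonneg v) (hZ' v)
    rw [dotProduct_sub, h1]
    linarith
  by_contra hne
  have hDne : D ≠ 0 := by
    intro h0
    apply hne
    funext i
    have : D i = 0 := congrFun h0 i
    simp [hD] at this
    omega
  -- cast to ℝ
  set x : Fin n → ℝ := fun i => (D i : ℝ) with hx
  have hxne : x ≠ 0 := by
    intro h0
    apply hDne
    funext i
    have : x i = 0 := congrFun h0 i
    simpa [hx] using this
  have hpos := hnegdef.dotProduct_mulVec_pos hxne
  have hcast : dotProduct (star x) ((M.map (Int.cast : ℤ → ℝ)).mulVec x)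
      = ((dotProduct D (M.mulVec D) : ℤ) : ℝ) := by
    simp only [dotProduct, Matrix.mulVec, Matrix.map_apply, hx, star_trivial]
    push_cast
    ring_nf
  rw [Matrix.neg_mulVec, dotProduct_neg, hcast] at hpos
  have : ((dotProduct D (M.mulVec D) : ℤ) : ℝ) < 0 := by linarith
  have : dotProduct D (M.mulVec D) < 0 := by exact_mod_cast this
  omega
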